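/- Let {x_n} and {y_n} be frames in a Hilbert space H. Then there exists a bounded invertible operator T : H → H such that {T y_n} is an alternate dual frame for {x_n} if and only if the operator S : H → H defined by S x = Σ_n ⟨x, x_n⟩ y_n is invertible (bounded with bounded inverse). -/

import Mathlib

open scoped ComplexConjugate

local notation "⟪" a ", " b "⟫" => (inner ℂ a b : ℂ)

/-- Frame inequality predicate. -/
def IsFrame {H : Type*} [NormedAddCommGroup H] [InnerProductSpace ℂ H]
    (φ : ℕ → H) : Prop :=
  ∃ A B : ℝ, 0 < A ∧ 0 < B ∧ ∀ f : H,
    Summable (fun n => ‖(inner ℂ (φ n) f : ℂ)‖ ^ 2) ∧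
    A * ‖f‖ ^ 2 ≤ ∑' n, ‖(inner ℂ (φ n) f : ℂ)‖ ^ 2 ∧
    ∑' n, ‖(inner ℂ (φ n) f : ℂ)‖ ^ 2 ≤ B * ‖f‖ ^ 2

section aux

variable {H : Type*} [NormedAddCommGroup H] [InnerProductSpace ℂ H] [CompleteSpace H]

/-- Finite synthesis bound for a Bessel sequence. -/
lemma synth_bound (y : ℕ → H) (B : ℝ) (hB0 : 0 ≤ B)
    (hB : ∀ (f : H) (s : Finset ℕ), ∑ n ∈ s, ‖⟪y n, f⟫‖ ^ 2 ≤ B * ‖f‖ ^ 2)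
    (c : ℕ → ℂ) (s : Finset ℕ) :
    ‖∑ n ∈ s, c n • y n‖ ^ 2 ≤ B * ∑ n ∈ s, ‖c n‖ ^ 2 := by
  set v := ∑ n ∈ s, c n • y n with hv
  have hcnn : (0:ℝ) ≤ ∑ n ∈ s, ‖c n‖ ^ 2 :=
    Finset.sum_nonneg fun n _ => sq_nonneg _
  by_cases h0 : ‖v‖ = 0
  · rw [h0]
    simpa using mul_nonneg hB0 hcnn
  have hvpos : 0 < ‖v‖ := lt_of_le_of_ne (norm_nonneg _) (Ne.symm h0)
  have h1 : (‖v‖ : ℝ) ^ 2 = ‖(⟪v, v⟫ : ℂ)‖ := by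
    rw [inner_self_eq_norm_sq_to_K (𝕜 := ℂ) v]
    simp [norm_pow]
  have h2 : (⟪v, v⟫ : ℂ) = ∑ n ∈ s, conj (c n) * ⟪y n, v⟫ := by
    rw [hv, sum_inner]
    simp [inner_smul_left, inner_sum, inner_smul_right, Finset.mul_sum, mul_left_comm]
  have h3 : ‖(⟪v, v⟫ : ℂ)‖ ≤ ∑ n ∈ s, ‖c n‖ * ‖⟪y n, v⟫‖ := by
    rw [h2]
    refine (norm_sum_le _ _).trans ?_
    apply Finset.sum_le_sum
    intro n _
    rw [norm_mul, RCLike.norm_conj]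
  have h4 : (∑ n ∈ s, ‖c n‖ * ‖⟪y n, v⟫‖) ^ 2 ≤
      (∑ n ∈ s, ‖c n‖ ^ 2) * ∑ n ∈ s, ‖⟪y n, v⟫‖ ^ 2 :=
    Finset.sum_mul_sq_le_sq_mul_sq s _ _
  have h5 : ∑ n ∈ s, ‖⟪y n, v⟫‖ ^ 2 ≤ B * ‖v‖ ^ 2 := hB v s
  -- ‖v‖^2 ≤ Σ ‖c‖ ‖⟨y,v⟩‖ and (Σ ...)^2 ≤ Σ‖c‖² * B ‖v‖²
  have h6 : ‖v‖ ^ 2 ≤ ∑ n ∈ s, ‖c n‖ * ‖⟪y n, v⟫‖ := h1 ▸ h3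
  have h7 : (‖v‖ ^ 2) ^ 2 ≤ (∑ n ∈ s, ‖c n‖ ^ 2) * (B * ‖v‖ ^ 2) := by
    calc (‖v‖ ^ 2) ^ 2 ≤ (∑ n ∈ s, ‖c n‖ * ‖⟪y n, v⟫‖) ^ 2 := by
          apply pow_le_pow_left₀ (sq_nonneg _) h6
      _ ≤ (∑ n ∈ s, ‖c n‖ ^ 2) * ∑ n ∈ s, ‖⟪y n, v⟫‖ ^ 2 := h4
      _ ≤ (∑ n ∈ s, ‖c n‖ ^ 2) * (B * ‖v‖ ^ 2) := by
          exact mul_le_mul_of_nonneg_left h5 hcnn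
  have hv2 : 0 < ‖v‖ ^ 2 := pow_pos hvpos 2
  nlinarith [hv2, h7]

/-- Synthesis operator convergence for Bessel sequences with ℓ² coefficients. -/
lemma synth_summable (y : ℕ → H) (B : ℝ) (hB0 : 0 ≤ B)
    (hB : ∀ (f : H) (s : Finset ℕ), ∑ n ∈ s, ‖⟪y n, f⟫‖ ^ 2 ≤ B * ‖f‖ ^ 2)
    (c : ℕ → ℂ) (hc : Summable (fun n => ‖c n‖ ^ 2)) :
    Summable (fun n => c n • y n) := by
  rw [summable_iff_vanishing]
  intro e he
  obtain ⟨ε, hε, hball⟩ := Metric.mem_nhds_iff.mp he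
  have hδ : 0 < ε ^ 2 / (B + 1) := by positivity
  obtain ⟨s, hs⟩ := (summable_iff_vanishing.mp hc) (Metric.ball 0 (ε ^ 2 / (B + 1)))
    (Metric.ball_mem_nhds 0 hδ)
  refine ⟨s, fun t ht => hball ?_⟩
  have h1 := synth_bound y B hB0 hB c t
  have h2 := hs t ht
  rw [Metric.mem_ball, Real.dist_eq, sub_zero] at h2
  have hcnn : (0:ℝ) ≤ ∑ n ∈ t, ‖c n‖ ^ 2 :=
    Finset.sum_nonneg fun n _ => sq_nonneg _
  rw [abs_of_nonneg hcnn] at h2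
  have h3 : ‖∑ n ∈ t, c n • y n‖ ^ 2 < ε ^ 2 := by
    have hB1 : B < B + 1 := by linarith
    have : B * ∑ n ∈ t, ‖c n‖ ^ 2 ≤ B * (ε ^ 2 / (B + 1)) :=
      mul_le_mul_of_nonneg_left h2.le hB0
    have hlt : B * (ε ^ 2 / (B + 1)) < ε ^ 2 := by
      rw [mul_div_assoc']
      rw [div_lt_iff₀ (by linarith)]
      nlinarith [sq_nonneg ε, hε]
    linarith
  rw [Metric.mem_ball, dist_zero_right]
  exact lt_of_pow_lt_pow_left₀ 2 hε.le h3

lemma frame_bessel (y : ℕ → H) (hy : IsFrame y) :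
    ∃ B : ℝ, 0 < B ∧ ∀ (f : H) (s : Finset ℕ), ∑ n ∈ s, ‖⟪y n, f⟫‖ ^ 2 ≤ B * ‖f‖ ^ 2 := by
  obtain ⟨A, B, hA, hB, h⟩ := hy
  refine ⟨B, hB, fun f s => ?_⟩
  obtain ⟨hsum, _, hub⟩ := h f
  exact le_trans (Summable.sum_le_tsum s (fun n _ => sq_nonneg _) hsum) hub

/-- A frame mapped through a continuous linear equivalence is a frame. -/
lemma frame_equiv (y : ℕ → H) (hy : IsFrame y) (T : H ≃L[ℂ] H) :
    IsFrame (fun n => T (y n)) := by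
  obtain ⟨A, B, hA, hB, h⟩ := hy
  set Tc : H →L[ℂ] H := (T : H →L[ℂ] H)
  set Ta := ContinuousLinearMap.adjoint Tc with hTa
  have key : ∀ n (f : H), ⟪T (y n), f⟫ = ⟪y n, Ta f⟫ := by
    intro n f
    rw [hTa, ContinuousLinearMap.adjoint_inner_right]
    rfl
  have hnorm : ∀ f : H, ‖f‖ ≤ ‖(T.symm : H →L[ℂ] H)‖ * ‖Tc f‖ := by
    intro f
    calc ‖f‖ = ‖T.symm (Tc f)‖ := by simp [Tc]
      _ ≤ ‖(T.symm : H →L[ℂ] H)‖ * ‖Tc f‖ := (T.symm : H →L[ℂ] H).le_opNorm _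
  refine ⟨A / (‖(ContinuousLinearMap.adjoint ((T.symm : H →L[ℂ] H)))‖ ^ 2 + 1),
    B * (‖Ta‖ ^ 2 + 1), by positivity, by positivity, fun f => ?_⟩
  obtain ⟨hsum, hlb, hub⟩ := h (Ta f)
  refine ⟨by simpa only [key] using hsum, ?_, ?_⟩
  · have hTf : ‖f‖ ≤ ‖(ContinuousLinearMap.adjoint ((T.symm : H →L[ℂ] H)))‖ * ‖Ta f‖ := by
      have : ContinuousLinearMap.adjoint ((T.symm : H →L[ℂ] H)) (Ta f) = f := by
        apply ext_inner_left ℂ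
        intro v
        rw [ContinuousLinearMap.adjoint_inner_right, hTa,
          ContinuousLinearMap.adjoint_inner_right]
        simp [Tc]
      calc ‖f‖ = ‖ContinuousLinearMap.adjoint ((T.symm : H →L[ℂ] H)) (Ta f)‖ := by rw [this]
        _ ≤ _ := ContinuousLinearMap.le_opNorm _ _
    set C := ‖(ContinuousLinearMap.adjoint ((T.symm : H →L[ℂ] H)))‖ with hC
    have hC0 : 0 ≤ C := norm_nonneg _
    have h2 : ‖f‖ ^ 2 ≤ C ^ 2 * ‖Ta f‖ ^ 2 := by
      rw [← mul_pow]
      exact pow_le_pow_left₀ (norm_nonneg _) hTf 2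
    have : A / (C ^ 2 + 1) * ‖f‖ ^ 2 ≤ A * ‖Ta f‖ ^ 2 := by
      rw [div_mul_eq_mul_div, div_le_iff₀ (by positivity)]
      have hAf : 0 ≤ A * ‖Ta f‖ ^ 2 := by positivity
      nlinarith [h2, hA.le, sq_nonneg (‖Ta f‖)]
    calc A / (C ^ 2 + 1) * ‖f‖ ^ 2 ≤ A * ‖Ta f‖ ^ 2 := this
      _ ≤ ∑' n, ‖⟪y n, Ta f⟫‖ ^ 2 := hlb
      _ = ∑' n, ‖⟪T (y n), f⟫‖ ^ 2 := by simp only [key]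
  · have hTaf : ‖Ta f‖ ≤ ‖Ta‖ * ‖f‖ := ContinuousLinearMap.le_opNorm _ _
    have h2 : ‖Ta f‖ ^ 2 ≤ ‖Ta‖ ^ 2 * ‖f‖ ^ 2 := by
      rw [← mul_pow]
      exact pow_le_pow_left₀ (norm_nonneg _) hTaf 2
    calc ∑' n, ‖⟪T (y n), f⟫‖ ^ 2 = ∑' n, ‖⟪y n, Ta f⟫‖ ^ 2 := by simp only [key]
      _ ≤ B * ‖Ta f‖ ^ 2 := hub
      _ ≤ B * (‖Ta‖ ^ 2 * ‖f‖ ^ 2) := mul_le_mul_of_nonneg_left h2 hB.le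
      _ ≤ B * (‖Ta‖ ^ 2 + 1) * ‖f‖ ^ 2 := by nlinarith [sq_nonneg ‖f‖, hB.le]

end aux

/-- For frames {x_n}, {y_n} in H: there is a bounded invertible T with
{T y_n} an alternate dual frame for {x_n} iff the operator S x = Σ_n ⟨x,x_n⟩ y_n is
invertible (bounded with bounded inverse). -/
theorem stmt3 {H : Type*} [NormedAddCommGroup H] [InnerProductSpace ℂ H] [CompleteSpace H]
    (x y : ℕ → H) (hx : IsFrame x) (hy : IsFrame y) :
    (∃ T : H ≃L[ℂ] H, IsFrame (fun n => T (y n)) ∧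
      ∀ f : H, HasSum (fun n => (inner ℂ (T (y n)) f : ℂ) • x n) f) ↔
    (∃ S : H ≃L[ℂ] H, ∀ f : H, HasSum (fun n => (inner ℂ (x n) f : ℂ) • y n) (S f)) := by
  obtain ⟨Bx, hBx, hBesx⟩ := frame_bessel x hx
  obtain ⟨By, hBy, hBesy⟩ := frame_bessel y hy
  constructor
  · rintro ⟨T, _, hTd⟩
    refine ⟨T.symm, fun f => ?_⟩
    have hcsum : Summable (fun n => ‖⟪x n, f⟫‖ ^ 2) := (hx.choose_spec.choose_spec.2.2 f).1
    obtain ⟨w, hw⟩ := (synth_summable y By hBy.le hBesy (fun n => ⟪x n, f⟫) hcsum)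
    suffices hTw : T w = f by
      rw [show T.symm f = w by rw [← hTw]; exact T.symm_apply_apply w]
      exact hw
    apply ext_inner_left ℂ
    intro g
    set Ta := ContinuousLinearMap.adjoint (T : H →L[ℂ] H) with hTa
    have e1 : ⟪g, T w⟫ = ⟪Ta g, w⟫ := by
      rw [hTa, ContinuousLinearMap.adjoint_inner_left]
      rfl
    -- from hw: ⟪Ta g, w⟫ = Σ ⟪x n, f⟫ * ⟪Ta g, y n⟫
    have h1 : HasSum (fun n => ⟪x n, f⟫ * ⟪Ta g, y n⟫) ⟪Ta g, w⟫ := by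
      have := (innerSL ℂ (Ta g)).hasSum hw
      simpa [inner_smul_right] using this
    -- from hTd g: ⟪f, g⟫ = Σ ⟪T (y n), g⟫ * ⟪f, x n⟫; take conj
    have h2 : HasSum (fun n => ⟪T (y n), g⟫ * ⟪f, x n⟫) ⟪f, g⟫ := by
      have := (innerSL ℂ f).hasSum (hTd g)
      simpa [inner_smul_right] using this
    have h3 : HasSum (fun n => conj (⟪T (y n), g⟫ * ⟪f, x n⟫)) (conj ⟪f, g⟫) := h2.star
    have h4 : (fun n => conj (⟪T (y n), g⟫ * ⟪f, x n⟫)) =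
        fun n => ⟪x n, f⟫ * ⟪Ta g, y n⟫ := by
      funext n
      have hconj : conj ⟪T (y n), g⟫ = ⟪Ta g, y n⟫ := by
        rw [inner_conj_symm]
        rw [hTa, ContinuousLinearMap.adjoint_inner_left]
        rfl
      rw [map_mul, hconj, inner_conj_symm]
      ring
    rw [h4] at h3
    rw [e1, h1.unique h3, inner_conj_symm]
  · rintro ⟨S, hS⟩
    refine ⟨S.symm, frame_equiv y hy S.symm, fun f => ?_⟩
    set Sa := ContinuousLinearMap.adjoint (S : H →L[ℂ] H) with hSa
    set Sb := ContinuousLinearMap.adjoint (S.symm : H →L[ℂ] H) with hSb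
    set g := Sb f with hg
    have key : ∀ n, ⟪S.symm (y n), f⟫ = ⟪y n, g⟫ := by
      intro n
      rw [hg, hSb, ContinuousLinearMap.adjoint_inner_right]
      rfl
    have hcsum : Summable (fun n => ‖⟪y n, g⟫‖ ^ 2) := (hy.choose_spec.choose_spec.2.2 g).1
    obtain ⟨w, hw⟩ := synth_summable x Bx hBx.le hBesx (fun n => ⟪y n, g⟫) hcsum
    have hwf : w = f := by
      have hwS : w = Sa g := by
        apply ext_inner_left ℂ
        intro v
        have h1 : HasSum (fun n => ⟪y n, g⟫ * ⟪v, x n⟫) ⟪v, w⟫ := by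
          have := (innerSL ℂ v).hasSum hw
          simpa [inner_smul_right] using this
        have h2 : HasSum (fun n => ⟪x n, v⟫ * ⟪g, y n⟫) ⟪g, S v⟫ := by
          have := (innerSL ℂ g).hasSum (hS v)
          simpa [inner_smul_right] using this
        have h3 : HasSum (fun n => conj (⟪x n, v⟫ * ⟪g, y n⟫)) (conj ⟪g, S v⟫) := h2.star
        have h4 : (fun n => conj (⟪x n, v⟫ * ⟪g, y n⟫)) =
            fun n => ⟪y n, g⟫ * ⟪v, x n⟫ := by
          funext n
          rw [map_mul, inner_conj_symm, inner_conj_symm]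
          ring
        rw [h4] at h3
        have h5 : ⟪v, Sa g⟫ = ⟪S v, g⟫ := by
          rw [hSa, ContinuousLinearMap.adjoint_inner_right]
          rfl
        rw [h1.unique h3, h5, inner_conj_symm]
      have hSag : Sa g = f := by
        apply ext_inner_left ℂ
        intro v
        rw [hSa, ContinuousLinearMap.adjoint_inner_right, hg, hSb,
          ContinuousLinearMap.adjoint_inner_right]
        simp
      rw [hwS, hSag]
    have : HasSum (fun n => ⟪S.symm (y n), f⟫ • x n) w := by
      simpa only [key] using hw
    rwa [hwf] at this
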